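/- arXiv:2104.12015 — 3 statements merged into one kernel-verified Lean document; each statement's English description precedes it below -/
import Mathlib

section
/- Let n ≥ 2 and e ≥ 1 be integers. The polynomial f(t) = 1 + t^e + t^{2e} + ... + t^{(n-1)e} (i.e. (t^{ne} - 1)/(t^e - 1)) is irreducible in ℤ[t] if and only if n is prime and e is a power of n (i.e. e = n^i for some i ≥ 0). -/
open Polynomial Finset

private lemma cyclo_not_unit {d : ℕ} (hd : 2 ≤ d) : ¬ IsUnit (cyclotomic d ℤ) := by
  intro h
  have h1 := natDegree_eq_zero_of_isUnit h
  rw [natDegree_cyclotomic] at h1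
  have h2 : 0 < Nat.totient d := Nat.totient_pos.2 (by omega)
  omega

private lemma geom_eq_prod (n e : ℕ) (hn : 2 ≤ n) (he : 1 ≤ e) :
    (∑ k ∈ Finset.range n, (Polynomial.X : Polynomial ℤ) ^ (k * e)) =
      ∏ d ∈ (n * e).divisors \ e.divisors, cyclotomic d ℤ := by
  have hne : 0 < n * e := by positivity
  have hsub : e.divisors ⊆ (n * e).divisors :=
    Nat.divisors_subset_of_dvd hne.ne' (dvd_mul_left e n)
  have hx : ((X : ℤ[X]) ^ e - 1) ≠ 0 := by
    intro h
    have := congrArg (fun p => Polynomial.eval 0 p) h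
    simp [zero_pow (by omega : e ≠ 0)] at this
  apply mul_right_cancel₀ hx
  have h1 : (∑ k ∈ Finset.range n, (X : ℤ[X]) ^ (k * e)) * (X ^ e - 1)
      = X ^ (n * e) - 1 := by
    simp only [pow_mul']
    rw [geom_sum_mul, ← pow_mul, mul_comm e n]
  rw [h1, ← prod_cyclotomic_eq_X_pow_sub_one hne ℤ,
    ← prod_cyclotomic_eq_X_pow_sub_one (by omega : 0 < e) ℤ,
    Finset.prod_sdiff hsub]

/-- Let `n ≥ 2` and `e ≥ 1` be integers. The polynomial
`f(t) = 1 + t^e + t^{2e} + ⋯ + t^{(n-1)e}` is irreducible in `ℤ[t]` if and only if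
`n` is prime and `e` is a power of `n`. -/
theorem geom_poly_irreducible_iff (n e : ℕ) (hn : 2 ≤ n) (he : 1 ≤ e) :
    Irreducible (∑ k ∈ Finset.range n, (Polynomial.X : Polynomial ℤ) ^ (k * e)) ↔
      Nat.Prime n ∧ ∃ i : ℕ, e = n ^ i := by
  have hne : 0 < n * e := by positivity
  constructor
  · intro hirr
    by_contra hcon
    have hd1 : n * e ∈ (n * e).divisors \ e.divisors := by
      simp only [Finset.mem_sdiff, Nat.mem_divisors]
      refine ⟨⟨dvd_rfl, hne.ne'⟩, ?_⟩
      rintro ⟨hd, -⟩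
      have := Nat.le_of_dvd (by omega) hd
      nlinarith
    obtain ⟨d2, hd2, hd2ne⟩ :
        ∃ d2, d2 ∈ (n * e).divisors \ e.divisors ∧ d2 ≠ n * e := by
      by_cases hp : Nat.Prime n
      · -- e not a power of n : get prime q ∣ e, q ≠ n
        have hq : ∃ q, Nat.Prime q ∧ q ∣ e ∧ q ≠ n := by
          by_contra hq
          push_neg at hq
          exact hcon ⟨hp, _, Nat.eq_prime_pow_of_unique_prime_dvd (by omega)
            (fun {d} hd hde => hq d hd hde)⟩
        obtain ⟨q, hqp, hqe, hqn⟩ := hq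
        obtain ⟨c, hc⟩ := hqe
        have hc0 : 0 < c := by
          rcases Nat.eq_zero_or_pos c with h | h
          · subst h; simp at hc; omega
          · exact h
        refine ⟨n * c, ?_, ?_⟩
        · simp only [Finset.mem_sdiff, Nat.mem_divisors]
          refine ⟨⟨mul_dvd_mul_left n ⟨q, by rw [hc]; ring⟩, hne.ne'⟩, ?_⟩
          rintro ⟨⟨m, hm⟩, -⟩
          have h5 : q * c = n * c * m := hc.symm.trans hm
          have h6 : q = n * m := Nat.eq_of_mul_eq_mul_right hc0
            (by rw [h5]; ring)
          have h7 : n ∣ q := ⟨m, h6⟩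
          exact hqn ((Nat.prime_dvd_prime_iff_eq hp hqp).mp h7).symm
        · have hce : c < e := by nlinarith [hqp.two_le]
          have : n * c < n * e := by nlinarith
          omega
      · -- n composite : n = q * c with q = minFac n, c ≥ 2 ; d2 = c * e
        have hq := Nat.minFac_prime (by omega : n ≠ 1)
        have hqlt : n.minFac < n := by
          rcases lt_or_eq_of_le (Nat.minFac_le (by omega : 0 < n)) with h | h
          · exact h
          · exact absurd (h ▸ hq) hp
        obtain ⟨c, hc⟩ := Nat.minFac_dvd n
        have hq2 := hq.two_le
        have hc2 : 2 ≤ c := by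
          rcases Nat.lt_or_ge c 2 with h | h
          · interval_cases c <;> omega
          · exact h
        have hcn : c < n := by nlinarith
        refine ⟨c * e, ?_, ?_⟩
        · simp only [Finset.mem_sdiff, Nat.mem_divisors]
          refine ⟨⟨mul_dvd_mul_right ⟨n.minFac, hc.trans (mul_comm _ _)⟩ e, hne.ne'⟩, ?_⟩
          rintro ⟨hd, -⟩
          have := Nat.le_of_dvd (by omega) hd
          nlinarith
        · have : c * e < n * e := by nlinarith
          omega
    -- derive contradiction
    set S := (n * e).divisors \ e.divisors with hS
    have hge2 : ∀ d ∈ S, 2 ≤ d := by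
      intro d hd
      simp only [hS, Finset.mem_sdiff, Nat.mem_divisors] at hd
      obtain ⟨⟨hdvd, -⟩, hnd⟩ := hd
      rcases Nat.lt_or_ge d 2 with h | h
      · interval_cases d
        · exact absurd (zero_dvd_iff.mp hdvd) hne.ne'
        · exact absurd ⟨one_dvd e, by omega⟩ hnd
      · exact h
    have hfac : (∑ k ∈ Finset.range n, (Polynomial.X : Polynomial ℤ) ^ (k * e)) =
        cyclotomic (n * e) ℤ * ∏ d ∈ S.erase (n * e), cyclotomic d ℤ := by
      rw [geom_eq_prod n e hn he, ← Finset.mul_prod_erase _ _ hd1]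
    rcases hirr.isUnit_or_isUnit hfac with h | h
    · exact cyclo_not_unit (hge2 _ hd1) h
    · have hd2' : d2 ∈ S.erase (n * e) := Finset.mem_erase.mpr ⟨hd2ne, hd2⟩
      rw [← Finset.mul_prod_erase _ _ hd2'] at h
      exact cyclo_not_unit (hge2 _ hd2) (isUnit_of_mul_isUnit_left h)
  · rintro ⟨hp, i, rfl⟩
    have key : (∑ k ∈ Finset.range n, (Polynomial.X : Polynomial ℤ) ^ (k * n ^ i)) =
        cyclotomic (n ^ (i + 1)) ℤ := by
      rw [cyclotomic_prime_pow_eq_geom_sum hp]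
      refine Finset.sum_congr rfl fun k _ => ?_
      rw [← pow_mul, mul_comm]
    rw [key]
    exact cyclotomic.irreducible (pow_pos hp.pos _)
end

section
/- Let q = r^e where r is prime and let n ≥ 2. If p = (q^n − 1)/(q − 1) is prime, then n is prime and e is a power of n. -/
/-- Geometric sum factorization: `S_{ab}(x) = S_a(x) * S_b(x^a)`. -/
lemma geom_sum_mul_split (x a b : ℕ) :
    ∑ k ∈ Finset.range (a * b), x ^ k =
      (∑ k ∈ Finset.range a, x ^ k) * (∑ j ∈ Finset.range b, (x ^ a) ^ j) := by
  induction b with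
  | zero => simp
  | succ b ih =>
    rw [Nat.mul_succ, Finset.sum_range_add, ih, Finset.sum_range_succ, Nat.mul_add,
      Finset.mul_sum]
    have h : ∀ i, x ^ (a * b + i) = x ^ i * (x ^ a) ^ b := by
      intro i; rw [pow_add, ← pow_mul, mul_comm a b, mul_comm]
    rw [Finset.sum_congr rfl fun i _ => h i, ← Finset.sum_mul]

lemma one_lt_geom_sum {x n : ℕ} (hx : 2 ≤ x) (hn : 2 ≤ n) :
    1 < ∑ k ∈ Finset.range n, x ^ k := by
  have h : (∑ k ∈ Finset.range 2, x ^ k) ≤ ∑ k ∈ Finset.range n, x ^ k := by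
    apply Finset.sum_le_sum_of_subset
    exact Finset.range_subset_range.mpr hn
  have h2 : (∑ k ∈ Finset.range 2, x ^ k) = 1 + x := by
    simp [Finset.sum_range_succ]
  omega

lemma geom_sum_strict_mono {x n s : ℕ} (hx : 2 ≤ x) (hn : 2 ≤ n) (hs : 2 ≤ s) :
    (∑ k ∈ Finset.range n, x ^ k) < ∑ k ∈ Finset.range n, (x ^ s) ^ k := by
  apply Finset.sum_lt_sum
  · intro i _
    rw [← pow_mul]
    exact Nat.pow_le_pow_right (by omega) (Nat.le_mul_of_pos_left i (by omega))
  · refine ⟨1, Finset.mem_range.mpr (by omega), ?_⟩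
    have h : x ^ 1 < x ^ s := Nat.pow_lt_pow_right (by omega) (by omega)
    simpa using h

/-- If `n` and `s` are distinct primes, then `S_n(x)` and `S_s(x)` are coprime. -/
lemma geom_sum_coprime {x n s : ℕ} (hn : Nat.Prime n) (hs : Nat.Prime s) (hns : n ≠ s) :
    Nat.Coprime (∑ k ∈ Finset.range n, x ^ k) (∑ k ∈ Finset.range s, x ^ k) := by
  by_contra hcop
  obtain ⟨g, hg, hgdvd⟩ := Nat.exists_prime_and_dvd hcop
  have hgn : g ∣ ∑ k ∈ Finset.range n, x ^ k := hgdvd.trans (Nat.gcd_dvd_left _ _)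
  have hgs : g ∣ ∑ k ∈ Finset.range s, x ^ k := hgdvd.trans (Nat.gcd_dvd_right _ _)
  haveI : Fact (Nat.Prime g) := ⟨hg⟩
  set y : ZMod g := (x : ZMod g) with hy
  have hn0 : (∑ k ∈ Finset.range n, y ^ k) = 0 := by
    have := (ZMod.natCast_eq_zero_iff _ g).mpr hgn
    push_cast at this
    exact this
  have hs0 : (∑ k ∈ Finset.range s, y ^ k) = 0 := by
    have := (ZMod.natCast_eq_zero_iff _ g).mpr hgs
    push_cast at this
    exact this
  have hyn : y ^ n = 1 := by
    have := geom_sum_mul y n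
    rw [hn0, zero_mul] at this
    have := sub_eq_zero.mp this.symm
    exact this
  have hys : y ^ s = 1 := by
    have := geom_sum_mul y s
    rw [hs0, zero_mul] at this
    exact sub_eq_zero.mp this.symm
  have hord : orderOf y ∣ Nat.gcd n s :=
    Nat.dvd_gcd (orderOf_dvd_of_pow_eq_one hyn) (orderOf_dvd_of_pow_eq_one hys)
  have hgcd : Nat.gcd n s = 1 := (Nat.coprime_primes hn hs).mpr hns
  rw [hgcd, Nat.dvd_one] at hord
  have hy1 : y = 1 := orderOf_eq_one_iff.mp hord
  rw [hy1] at hn0 hs0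
  simp only [one_pow, Finset.sum_const, Finset.card_range, nsmul_eq_mul, mul_one] at hn0 hs0
  have h1 : g ∣ n := (ZMod.natCast_eq_zero_iff _ g).mp hn0
  have h2 : g ∣ s := (ZMod.natCast_eq_zero_iff _ g).mp hs0
  have e1 : g = n := (Nat.prime_dvd_prime_iff_eq hg hn).mp h1
  have e2 : g = s := (Nat.prime_dvd_prime_iff_eq hg hs).mp h2
  exact hns (e1 ▸ e2)

/-- Let `q = r^e` where `r` is prime, and let `n ≥ 2`. If
`p = (q^n − 1)/(q − 1) = 1 + q + ⋯ + q^{n-1}` is prime, then `n` is prime and `e` is a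
power of `n`. -/
theorem projective_prime_necessary (r e n : ℕ) (hr : Nat.Prime r) (he : 1 ≤ e) (hn : 2 ≤ n)
    (hp : Nat.Prime (∑ k ∈ Finset.range n, (r ^ e) ^ k)) :
    Nat.Prime n ∧ ∃ i : ℕ, e = n ^ i := by
  have hq2 : 2 ≤ r ^ e := le_trans hr.two_le (Nat.le_self_pow (by omega) r)
  -- Part 1: n is prime
  have hnp : Nat.Prime n := by
    by_contra hnot
    obtain ⟨m, hmdvd, hm2, hmlt⟩ := Nat.exists_dvd_of_not_prime2 hn hnot
    set b := n / m with hbdef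
    have hb : m * b = n := Nat.mul_div_cancel' hmdvd
    have hb2 : 2 ≤ b := by
      rcases Nat.lt_or_ge b 2 with h | h
      · interval_cases b <;> omega
      · exact h
    have hfac : (∑ k ∈ Finset.range n, (r ^ e) ^ k) =
        (∑ k ∈ Finset.range m, (r ^ e) ^ k) *
          (∑ j ∈ Finset.range b, ((r ^ e) ^ m) ^ j) := by
      rw [← hb, geom_sum_mul_split]
    have h1 : 1 < ∑ k ∈ Finset.range m, (r ^ e) ^ k := one_lt_geom_sum hq2 hm2
    have h2 : 1 < ∑ j ∈ Finset.range b, ((r ^ e) ^ m) ^ j :=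
      one_lt_geom_sum (le_trans hq2 (Nat.le_self_pow (by omega) _)) hb2
    have hdvd : (∑ k ∈ Finset.range m, (r ^ e) ^ k) ∣
        ∑ k ∈ Finset.range n, (r ^ e) ^ k := ⟨_, hfac⟩
    rcases hp.eq_one_or_self_of_dvd _ hdvd with h | h
    · omega
    · rw [hfac] at h
      nlinarith [h1, h2]
  refine ⟨hnp, ?_⟩
  -- Part 2: e is a power of n
  by_contra hcon
  have hex : ∃ s, Nat.Prime s ∧ s ∣ e ∧ s ≠ n := by
    by_contra hs; push_neg at hs
    exact hcon ⟨e.primeFactorsList.length,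
      Nat.eq_prime_pow_of_unique_prime_dvd (by omega) fun hq hd => hs _ hq hd⟩
  obtain ⟨s, hsp, hsdvd, hsn⟩ := hex
  set m := e / s with hmdef
  have hm : m * s = e := Nat.div_mul_cancel hsdvd
  have hm1 : 1 ≤ m := by
    rcases Nat.eq_zero_or_pos m with h | h
    · rw [h, zero_mul] at hm; omega
    · exact h
  set q0 := r ^ m with hq0def
  have hq0 : 2 ≤ q0 := le_trans hr.two_le (Nat.le_self_pow (by omega) r)
  have hre : r ^ e = q0 ^ s := by rw [hq0def, ← pow_mul, hm]
  -- the prime p equals S_n(q0^s)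
  rw [hre] at hp
  have hA : ∑ k ∈ Finset.range (n * s), q0 ^ k =
      (∑ k ∈ Finset.range n, q0 ^ k) * (∑ j ∈ Finset.range s, (q0 ^ n) ^ j) :=
    geom_sum_mul_split q0 n s
  have hB : ∑ k ∈ Finset.range (s * n), q0 ^ k =
      (∑ k ∈ Finset.range s, q0 ^ k) * (∑ j ∈ Finset.range n, (q0 ^ s) ^ j) :=
    geom_sum_mul_split q0 s n
  rw [mul_comm n s, hB] at hA
  have hdvd : (∑ k ∈ Finset.range n, q0 ^ k) ∣
      (∑ k ∈ Finset.range s, q0 ^ k) * (∑ j ∈ Finset.range n, (q0 ^ s) ^ j) :=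
    ⟨_, hA⟩
  have hcop : Nat.Coprime (∑ k ∈ Finset.range n, q0 ^ k)
      (∑ k ∈ Finset.range s, q0 ^ k) := geom_sum_coprime hnp hsp (fun h => hsn h.symm)
  have hdvdp : (∑ k ∈ Finset.range n, q0 ^ k) ∣
      ∑ j ∈ Finset.range n, (q0 ^ s) ^ j := hcop.dvd_of_dvd_mul_left hdvd
  have h1 : 1 < ∑ k ∈ Finset.range n, q0 ^ k := one_lt_geom_sum hq0 hn
  rcases hp.eq_one_or_self_of_dvd _ hdvdp with h | h
  · omega
  · have := geom_sum_strict_mono hq0 hn hsp.two_le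
    omega
end

section
/- For a Fermat prime p = 2^{2^k} + 1 with q = 2^{2^k} ≥ 4, in the action of PSL_2(q) on P^1(F_q) an element of order 3 has cycle type 3^{(q−1)/3}1^2, an involution has cycle type 2^{q/2}1^1, and an element of order p = q + 1 is a (q+1)-cycle; the corresponding dessin of degree p has Euler characteristic (q−1)/3 + 2 + q/2 + 1 − (q+1) + 1 = (16 − q)/6 and genus (q − 4)/12 = (p − 5)/12. -/
open Matrix

instance {K : Type*} [Field K] [Fintype K] :
    Finite (Projectivization K (Fin 2 → K)) := by
  unfold Projectivization
  infer_instance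

noncomputable instance {K : Type*} [Field K] [Fintype K] :
    Fintype (Projectivization K (Fin 2 → K)) := Fintype.ofFinite _

noncomputable instance {K : Type*} [Field K] :
    DecidableEq (Projectivization K (Fin 2 → K)) := Classical.decEq _

/-- The permutation of the projective line `ℙ¹(K)` induced by an element of `SL₂(K)`. -/
noncomputable def mobiusPerm {K : Type*} [Field K]
    (g : Matrix.SpecialLinearGroup (Fin 2) K) :
    Equiv.Perm (Projectivization K (Fin 2 → K)) where
  toFun := Projectivization.map
    ((Matrix.SpecialLinearGroup.toLin' g).toLinearMap)
    (Matrix.SpecialLinearGroup.toLin' g).injective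
  invFun := Projectivization.map
    ((Matrix.SpecialLinearGroup.toLin' g⁻¹).toLinearMap)
    (Matrix.SpecialLinearGroup.toLin' g⁻¹).injective
  left_inv := fun x => by
    induction x using Projectivization.ind with
    | h v hv =>
      rw [Projectivization.map_mk, Projectivization.map_mk]
      congr 1
      rw [map_inv]
      exact (Matrix.SpecialLinearGroup.toLin' g).symm_apply_apply v
  right_inv := fun x => by
    induction x using Projectivization.ind with
    | h v hv =>
      rw [Projectivization.map_mk, Projectivization.map_mk]
      congr 1
      rw [map_inv]
      exact (Matrix.SpecialLinearGroup.toLin' g).apply_symm_apply v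



section PutAfterMobiusPerm

variable {K : Type*} [Field K]

lemma mobiusPerm_mk (g : Matrix.SpecialLinearGroup (Fin 2) K) (v : Fin 2 → K) (hv : v ≠ 0)
    (hv' : Matrix.SpecialLinearGroup.toLin' g v ≠ 0) :
    mobiusPerm g (Projectivization.mk K v hv) =
      Projectivization.mk K (Matrix.SpecialLinearGroup.toLin' g v) hv' := by
  unfold mobiusPerm
  rw [Equiv.coe_fn_mk, Projectivization.map_mk]
  rfl

lemma mobius_eigen (g : Matrix.SpecialLinearGroup (Fin 2) K)
    {x : Projectivization K (Fin 2 → K)} (hx : mobiusPerm g x = x) :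
    ∃ c : Kˣ, Matrix.SpecialLinearGroup.toLin' g x.rep = (c : K) • x.rep := by
  have hx' : mobiusPerm g (Projectivization.mk K x.rep x.rep_nonzero) =
      Projectivization.mk K x.rep x.rep_nonzero := by
    rw [Projectivization.mk_rep]; exact hx
  rw [mobiusPerm_mk g x.rep x.rep_nonzero
    ((Matrix.SpecialLinearGroup.toLin' g).map_ne_zero_iff.mpr x.rep_nonzero),
    Projectivization.mk_eq_mk_iff] at hx'
  obtain ⟨c, hc⟩ := hx'
  exact ⟨c, by rw [← hc, Units.smul_def]⟩

lemma mobiusPerm_eq_one (g : Matrix.SpecialLinearGroup (Fin 2) K)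
    {x y z : Projectivization K (Fin 2 → K)} (hxy : x ≠ y) (hxz : x ≠ z) (hyz : y ≠ z)
    (hx : mobiusPerm g x = x) (hy : mobiusPerm g y = y) (hz : mobiusPerm g z = z) :
    mobiusPerm g = 1 := by
  classical
  obtain ⟨c₁, h1⟩ := mobius_eigen g hx
  obtain ⟨c₂, h2⟩ := mobius_eigen g hy
  obtain ⟨c₃, h3⟩ := mobius_eigen g hz
  have li : LinearIndependent K ![x.rep, y.rep] := by
    have h1 := (Projectivization.independent_pair_iff_ne x y).mpr hxy
    rw [Projectivization.independent_iff] at h1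
    have he : Projectivization.rep ∘ ![x, y] = ![x.rep, y.rep] := by
      funext i; fin_cases i <;> rfl
    rwa [he] at h1
  have hfr : Fintype.card (Fin 2) = Module.finrank K (Fin 2 → K) := by
    simp [Module.finrank_fin_fun]
  set B := basisOfLinearIndependentOfCardEqFinrank li hfr with hBdef
  have hB : ⇑B = ![x.rep, y.rep] := coe_basisOfLinearIndependentOfCardEqFinrank li hfr
  have hrepr : ∀ w : Fin 2 → K, w = B.repr w 0 • x.rep + B.repr w 1 • y.rep := by
    intro w
    have h := B.sum_repr w
    rw [Fin.sum_univ_two, hB] at h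
    simpa using h.symm
  set a := B.repr z.rep 0 with hadef
  set b := B.repr z.rep 1 with hbdef
  have hz' : z.rep = a • x.rep + b • y.rep := hrepr z.rep
  have ha : a ≠ 0 := by
    intro h0
    apply hyz
    have hb0 : b ≠ 0 := by
      intro h0'
      exact z.rep_nonzero (by rw [hz', h0, h0', zero_smul, zero_smul, add_zero])
    have hzy : Projectivization.mk K z.rep z.rep_nonzero =
        Projectivization.mk K y.rep y.rep_nonzero := by
      rw [Projectivization.mk_eq_mk_iff]
      exact ⟨Units.mk0 b hb0, by simp [Units.smul_def, hz', h0]⟩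
    rw [Projectivization.mk_rep, Projectivization.mk_rep] at hzy
    exact hzy.symm
  have hb : b ≠ 0 := by
    intro h0
    apply hxz
    have ha0 : a ≠ 0 := by
      intro h0'
      exact z.rep_nonzero (by rw [hz', h0, h0', zero_smul, zero_smul, add_zero])
    have hzx : Projectivization.mk K z.rep z.rep_nonzero =
        Projectivization.mk K x.rep x.rep_nonzero := by
      rw [Projectivization.mk_eq_mk_iff]
      exact ⟨Units.mk0 a ha0, by simp [Units.smul_def, hz', h0]⟩
    rw [Projectivization.mk_rep, Projectivization.mk_rep] at hzx
    exact hzx.symm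
  have hAz1 : Matrix.SpecialLinearGroup.toLin' g z.rep
      = (a * (c₁ : K)) • x.rep + (b * (c₂ : K)) • y.rep := by
    rw [hz', map_add, LinearEquiv.map_smul, LinearEquiv.map_smul, h1, h2, smul_smul, smul_smul]
  have hAz2 : Matrix.SpecialLinearGroup.toLin' g z.rep
      = ((c₃ : K) * a) • x.rep + ((c₃ : K) * b) • y.rep := by
    rw [h3, hz', smul_add, smul_smul, smul_smul]
  have hzero : (a * (c₁ : K) - (c₃ : K) * a) • x.rep
      + (b * (c₂ : K) - (c₃ : K) * b) • y.rep = 0 := by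
    rw [sub_smul, sub_smul]
    rw [hAz1] at hAz2
    rw [← sub_eq_zero] at hAz2
    rw [← hAz2]; abel
  obtain ⟨e1, e2⟩ := li.eq_zero_of_pair hzero
  have hc1 : (c₁ : K) = (c₃ : K) := by
    have h := mul_left_cancel₀ ha (a := a) (b := (c₁ : K)) (c := (c₃ : K))
    apply h
    rw [sub_eq_zero] at e1; rw [e1, mul_comm]
  have hc2 : (c₂ : K) = (c₃ : K) := by
    have h := mul_left_cancel₀ hb (a := b) (b := (c₂ : K)) (c := (c₃ : K))
    apply h
    rw [sub_eq_zero] at e2; rw [e2, mul_comm]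
  have hall : ∀ w : Fin 2 → K,
      Matrix.SpecialLinearGroup.toLin' g w = (c₃ : K) • w := by
    intro w
    calc Matrix.SpecialLinearGroup.toLin' g w
        = Matrix.SpecialLinearGroup.toLin' g (B.repr w 0 • x.rep + B.repr w 1 • y.rep) := by
          rw [← hrepr]
    _ = B.repr w 0 • ((c₁ : K) • x.rep) + B.repr w 1 • ((c₂ : K) • y.rep) := by
        rw [map_add, LinearEquiv.map_smul, LinearEquiv.map_smul, h1, h2]
    _ = (c₃ : K) • (B.repr w 0 • x.rep + B.repr w 1 • y.rep) := by
        rw [hc1, hc2, smul_add, smul_comm (B.repr w 0), smul_comm (B.repr w 1)]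
    _ = (c₃ : K) • w := by rw [← hrepr]
  apply Equiv.ext
  intro w
  induction w using Projectivization.ind with
  | h v hv =>
    rw [mobiusPerm_mk g v hv ((Matrix.SpecialLinearGroup.toLin' g).map_ne_zero_iff.mpr hv)]
    rw [Equiv.Perm.one_apply, Projectivization.mk_eq_mk_iff]
    exact ⟨c₃, by rw [Units.smul_def, ← hall]⟩

end PutAfterMobiusPerm

lemma card_proj (F : Type) [Field F] [Fintype F] :
    Fintype.card (Projectivization F (Fin 2 → F)) = Fintype.card F + 1 := by
  classical
  let L : (F × F) ≃ₗ[F] (Fin 2 → F) := (LinearEquiv.finTwoArrow F F).symm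
  have hsurj : Function.Surjective (Projectivization.map L.toLinearMap L.injective) := by
    intro w
    induction w using Projectivization.ind with
    | h v hv =>
      refine ⟨Projectivization.mk F (L.symm v) (by simp [hv]), ?_⟩
      rw [Projectivization.map_mk]
      congr 1
      exact L.apply_symm_apply v
  have e1 : Projectivization F (F × F) ≃ Projectivization F (Fin 2 → F) :=
    Equiv.ofBijective _ ⟨Projectivization.map_injective L.toLinearMap L.injective, hsurj⟩
  have e2 := OnePoint.equivProjectivization F
  rw [← Nat.card_eq_fintype_card]
  calc Nat.card (Projectivization F (Fin 2 → F)) = Nat.card (Projectivization F (F × F)) :=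
        Nat.card_congr e1.symm
    _ = Nat.card (OnePoint F) := Nat.card_congr (e1.trans e2.symm)
    _ = Nat.card (Option F) := rfl
    _ = Fintype.card F + 1 := by simp [Nat.card_eq_fintype_card]

/-- For a Fermat prime `p = 2^{2^k} + 1` with `q = 2^{2^k} ≥ 4`, in the action of
`PSL₂(q)` on `ℙ¹(𝔽_q)` an element of order 3 has cycle type `3^{(q−1)/3}1²`, an
involution has cycle type `2^{q/2}1¹`, and an element of order `p = q + 1` is a
`(q+1)`-cycle; the corresponding dessin of degree `p` has Euler characteristic
`(q−1)/3 + 2 + q/2 + 1 − (q+1) + 1 = (16 − q)/6` and genus `(q − 4)/12 = (p − 5)/12`. -/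
theorem fermat_prime_dessin (k q p : ℕ) (hq : q = 2 ^ 2 ^ k) (hq4 : 4 ≤ q)
    (hp : p = q + 1) (hpp : Nat.Prime p)
    (F : Type) [Field F] [Fintype F] (hF : Fintype.card F = q) :
    (∀ g : Matrix.SpecialLinearGroup (Fin 2) F, orderOf (mobiusPerm g) = 3 →
        (mobiusPerm g).cycleType = Multiset.replicate ((q - 1) / 3) 3) ∧
      (∀ g : Matrix.SpecialLinearGroup (Fin 2) F, orderOf (mobiusPerm g) = 2 →
        (mobiusPerm g).cycleType = Multiset.replicate (q / 2) 2) ∧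
      (∀ g : Matrix.SpecialLinearGroup (Fin 2) F, orderOf (mobiusPerm g) = p →
        (mobiusPerm g).cycleType = {p}) ∧
      ((q : ℚ) - 1) / 3 + 2 + (q : ℚ) / 2 + 1 - ((q : ℚ) + 1) + 1 = (16 - (q : ℚ)) / 6 ∧
      1 - ((16 - (q : ℚ)) / 6) / 2 = ((q : ℚ) - 4) / 12 ∧
      ((q : ℚ) - 4) / 12 = ((p : ℚ) - 5) / 12 := by
  have hk : k ≠ 0 := by
    rintro rfl
    rw [hq] at hq4
    norm_num at hq4
  have hmod3 : 3 ∣ q - 1 := by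
    have hq' : q = 4 ^ 2 ^ (k - 1) := by
      rw [hq]
      rw [show (4:ℕ) = 2 ^ 2 from rfl, ← pow_mul]
      congr 1
      rw [show 2 ^ k = 2 ^ (k - 1 + 1) from by rw [Nat.sub_add_cancel (Nat.one_le_iff_ne_zero.mpr hk)]]
      ring
    calc (3:ℕ) = 4 - 1 := rfl
      _ ∣ 4 ^ 2 ^ (k - 1) - 1 ^ 2 ^ (k - 1) := Nat.sub_dvd_pow_sub_pow 4 1 _
      _ = q - 1 := by rw [one_pow, ← hq']
  have h2q : 2 ∣ q := by
    rw [hq]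
    exact dvd_pow_self 2 (by positivity)
  have hcard : Fintype.card (Projectivization F (Fin 2 → F)) = q + 1 := by
    rw [card_proj, hF]
  -- generic support bound
  have hsupp : ∀ g : Matrix.SpecialLinearGroup (Fin 2) F, mobiusPerm g ≠ 1 →
      q + 1 - (mobiusPerm g).support.card ≤ 2 := by
    intro g hne
    have hfix : ((mobiusPerm g).supportᶜ).card ≤ 2 := by
      by_contra hgt
      push_neg at hgt
      rw [Finset.two_lt_card_iff] at hgt
      obtain ⟨x, y, z, hxm, hym, hzm, hxy, hxz, hyz⟩ := hgt
      exact hne (mobiusPerm_eq_one g hxy hxz hyz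
        (Equiv.Perm.notMem_support.mp (Finset.mem_compl.mp hxm))
        (Equiv.Perm.notMem_support.mp (Finset.mem_compl.mp hym))
        (Equiv.Perm.notMem_support.mp (Finset.mem_compl.mp hzm)))
    have hc := Finset.card_compl (mobiusPerm g).support
    rw [hcard] at hc
    omega
  refine ⟨?_, ?_, ?_, by ring, by ring, by rw [hp]; push_cast; ring⟩
  · intro g hord
    have hne : mobiusPerm g ≠ 1 := by
      intro h; rw [h, orderOf_one] at hord; norm_num at hord
    have hpr : (orderOf (mobiusPerm g)).Prime := by rw [hord]; norm_num
    obtain ⟨m, hct⟩ := Equiv.Perm.cycleType_prime_order hpr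
    rw [hord] at hct
    have hsum : (mobiusPerm g).support.card = (m + 1) * 3 := by
      rw [← Equiv.Perm.sum_cycleType, hct, Multiset.sum_replicate, smul_eq_mul]
    have hle : (mobiusPerm g).support.card ≤ q + 1 := by
      rw [← hcard]; exact Finset.card_le_univ _
    have hfx := hsupp g hne
    have hm : m + 1 = (q - 1) / 3 := by omega
    rw [hct, hm]
  · intro g hord
    have hne : mobiusPerm g ≠ 1 := by
      intro h; rw [h, orderOf_one] at hord; norm_num at hord
    have hpr : (orderOf (mobiusPerm g)).Prime := by rw [hord]; norm_num
    obtain ⟨m, hct⟩ := Equiv.Perm.cycleType_prime_order hpr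
    rw [hord] at hct
    have hsum : (mobiusPerm g).support.card = (m + 1) * 2 := by
      rw [← Equiv.Perm.sum_cycleType, hct, Multiset.sum_replicate, smul_eq_mul]
    have hle : (mobiusPerm g).support.card ≤ q + 1 := by
      rw [← hcard]; exact Finset.card_le_univ _
    have hfx := hsupp g hne
    have hm : m + 1 = q / 2 := by omega
    rw [hct, hm]
  · intro g hord
    have hpr : (orderOf (mobiusPerm g)).Prime := by rw [hord]; exact hpp
    obtain ⟨m, hct⟩ := Equiv.Perm.cycleType_prime_order hpr
    rw [hord] at hct
    have hsum : (mobiusPerm g).support.card = (m + 1) * p := by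
      rw [← Equiv.Perm.sum_cycleType, hct, Multiset.sum_replicate, smul_eq_mul]
    have hle : (mobiusPerm g).support.card ≤ q + 1 := by
      rw [← hcard]; exact Finset.card_le_univ _
    have hm : m = 0 := by
      have h1 : (m + 1) * p ≤ 1 * p := by rw [one_mul, ← hsum, hp]; exact hle
      have := Nat.le_of_mul_le_mul_right h1 hpp.pos
      omega
    rw [hct, hm, Multiset.replicate_one]
end
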